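/- Let Δ be a simplicial complex of dimension d-1 with d ≥ 2 whose every minimal non-face has cardinality at most d (relation type ≤ d). If the number of (d-1)-dimensional facets of Δ is at most 2d-1, then the reduced homology H̃_{d-1}(Δ; k) vanishes for any field k. -/

import Mathlib

open Finset

/-- An (abstract) simplicial complex on the vertex set `Fin n`:
a family of finite subsets closed under taking subsets. -/
def IsComplex {n : ℕ} (Δ : Set (Finset (Fin n))) : Prop :=
  ∀ F ∈ Δ, ∀ G : Finset (Fin n), G ⊆ F → G ∈ Δ

/-- The simplicial boundary operator on chains (functions on the finite subsets of
`Fin n`) with coefficients in `k`: on the basis element corresponding to a set `F`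
it is the alternating sum of the basis elements corresponding to the subsets of `F`
with one point removed. -/
noncomputable def bdry (n : ℕ) (k : Type) [Field k] :
    (Finset (Fin n) → k) →ₗ[k] (Finset (Fin n) → k) :=
  LinearMap.pi fun G =>
    ∑ a ∈ Gᶜ, ((-1 : k) ^ (G.filter (fun b => b < a)).card) • LinearMap.proj (insert a G)

/-- The subspace of chains supported on the faces of `Δ` of cardinality `m`. -/
noncomputable def spanFaces (n : ℕ) (k : Type) [Field k] (Δ : Set (Finset (Fin n))) (m : ℕ) :
    Submodule k (Finset (Fin n) → k) :=
  Submodule.span k {x | ∃ F ∈ Δ, F.card = m ∧ x = Pi.single F (1 : k)}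

/-- Reduced simplicial `i`-cycles of `Δ` over `k` (chains on `(i+1)`-element faces
killed by the boundary operator; in degree `0` the boundary operator is the
augmentation, so degree-`0` cycles are the *reduced* ones). -/
noncomputable def cycles (n : ℕ) (k : Type) [Field k] (Δ : Set (Finset (Fin n))) (i : ℕ) :
    Submodule k (Finset (Fin n) → k) :=
  spanFaces n k Δ (i + 1) ⊓ LinearMap.ker (bdry n k)

/-- Simplicial `i`-boundaries of `Δ` over `k`. -/
noncomputable def boundaries (n : ℕ) (k : Type) [Field k] (Δ : Set (Finset (Fin n))) (i : ℕ) :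
    Submodule k (Finset (Fin n) → k) :=
  Submodule.map (bdry n k) (spanFaces n k Δ (i + 2))

/-- Vanishing of the `i`-th reduced simplicial homology `H̃ᵢ(Δ; k)`:
every `i`-cycle is a boundary. -/
def HVanishes (n : ℕ) (k : Type) [Field k] (Δ : Set (Finset (Fin n))) (i : ℕ) : Prop :=
  cycles n k Δ i ≤ boundaries n k Δ i

/-- The `i`-th reduced simplicial homology module `H̃ᵢ(Δ; k)`: cycles modulo boundaries. -/
noncomputable abbrev RHomology (n : ℕ) (k : Type) [Field k] (Δ : Set (Finset (Fin n))) (i : ℕ) :=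
  (cycles n k Δ i) ⧸ ((boundaries n k Δ i).comap (cycles n k Δ i).subtype)


section Aux

variable {n : ℕ} {k : Type} [Field k]

lemma bdry_apply (x : Finset (Fin n) → k) (G : Finset (Fin n)) :
    bdry n k x G
      = ∑ a ∈ Gᶜ, (-1 : k) ^ (G.filter (fun b => b < a)).card * x (insert a G) := by
  simp [bdry, LinearMap.pi_apply, LinearMap.sum_apply, LinearMap.proj_apply, smul_eq_mul]

lemma spanFaces_support {Δ : Set (Finset (Fin n))} {m : ℕ} {x : Finset (Fin n) → k}
    (hx : x ∈ spanFaces n k Δ m) (F : Finset (Fin n)) (hF : x F ≠ 0) :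
    F ∈ Δ ∧ F.card = m := by
  by_contra hc
  refine hF ?_
  let S : Submodule k (Finset (Fin n) → k) :=
    { carrier := {y | ∀ G, ¬(G ∈ Δ ∧ G.card = m) → y G = 0}
      add_mem' := fun ha hb G hG => by
        simp only [Pi.add_apply]
        rw [ha G hG, hb G hG, add_zero]
      zero_mem' := fun G hG => rfl
      smul_mem' := fun c y hy G hG => by
        simp only [Pi.smul_apply]
        rw [hy G hG, smul_zero] }
  have hle : spanFaces n k Δ m ≤ S := by
    rw [spanFaces, Submodule.span_le]
    rintro y ⟨G, hG, hGc, rfl⟩ G' hG'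
    have hne : G' ≠ G := fun h => hG' (h ▸ ⟨hG, hGc⟩)
    exact Pi.single_eq_of_ne hne 1
  exact hle hx F hc

variable {α : Type*} [DecidableEq α]

lemma sdiff_insert_erase {F : Finset α} {a v : α} (ha : a ∉ F) (hv : v ∈ F) :
    F \ insert a (F.erase v) = {v} := by
  ext u
  by_cases h1 : u = v <;> by_cases h2 : u = a <;> subst_vars <;> simp_all

lemma insert_erase_sdiff {F : Finset α} {a v : α} (ha : a ∉ F) (hv : v ∈ F) :
    insert a (F.erase v) \ F = {a} := by
  ext u
  by_cases h1 : u = v <;> by_cases h2 : u = a <;> subst_vars <;> simp_all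

lemma sdiff_pair {F : Finset α} {v w y b : α} (hv : v ∈ F) (hw : w ∈ F) (hvw : v ≠ w)
    (hy : y ∉ F) (hb : b ∉ F) (hyb : y ≠ b) :
    F \ insert b (insert y ((F.erase v).erase w)) = {v, w} := by
  ext u
  by_cases h1 : u = v <;> by_cases h2 : u = w <;> by_cases h3 : u = y <;>
    by_cases h4 : u = b <;> subst_vars <;> simp_all

lemma pair_sdiff {F : Finset α} {v w y b : α} (hv : v ∈ F) (hw : w ∈ F) (hvw : v ≠ w)
    (hy : y ∉ F) (hb : b ∉ F) (hyb : y ≠ b) :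
    insert b (insert y ((F.erase v).erase w)) \ F = {y, b} := by
  ext u
  by_cases h1 : u = v <;> by_cases h2 : u = w <;> by_cases h3 : u = y <;>
    by_cases h4 : u = b <;> subst_vars <;> simp_all

lemma insert_swap_identity {F : Finset α} {v w y : α} (hv : v ∈ F) (hw : w ∈ F)
    (hvw : v ≠ w) (hy : y ∉ F) :
    insert v (insert y ((F.erase v).erase w)) = insert y (F.erase w) := by
  ext u
  by_cases h1 : u = v <;> by_cases h2 : u = w <;> by_cases h3 : u = y <;>
    subst_vars <;> simp_all

end Aux

/-- Let `Δ` be a simplicial complex of dimension `d - 1` (`d ≥ 2`) every minimal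
non-face of which has cardinality at most `d` (relation type `≤ d`).  If the number of
`(d-1)`-dimensional facets of `Δ` is at most `2d - 1`, then the reduced homology
`H̃_{d-1}(Δ; k)` vanishes for any field `k`. -/
theorem key_vanishing (n d : ℕ) (k : Type) [Field k] (hd : 2 ≤ d)
    (Δ : Finset (Finset (Fin n))) (hΔ : IsComplex (↑Δ : Set (Finset (Fin n))))
    (hdim : ∀ F ∈ Δ, F.card ≤ d)
    (hrt : ∀ G : Finset (Fin n), G ∉ Δ → (∀ G' ⊂ G, G' ∈ Δ) → G.card ≤ d)
    (hmult : (Δ.filter fun F => F.card = d).card ≤ 2 * d - 1) :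
    HVanishes n k (↑Δ : Set (Finset (Fin n))) (d - 1) := by
  classical
  intro x hx
  have hx1 : x ∈ spanFaces n k (↑Δ : Set (Finset (Fin n))) (d - 1 + 1) :=
    (Submodule.mem_inf.mp hx).1
  have hx2 : bdry n k x = 0 := LinearMap.mem_ker.mp (Submodule.mem_inf.mp hx).2
  suffices hx0 : x = 0 by
    rw [hx0]; exact Submodule.zero_mem _
  by_contra hne
  have hD : d - 1 + 1 = d := by omega
  have hsupp : ∀ F, x F ≠ 0 → F ∈ Δ ∧ F.card = d := by
    intro F hF
    have h := spanFaces_support hx1 F hF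
    rw [hD] at h
    simpa using h
  have hbd : ∀ G : Finset (Fin n),
      ∑ a ∈ Gᶜ, (-1 : k) ^ (G.filter (fun b => b < a)).card * x (insert a G) = 0 := by
    intro G
    rw [← bdry_apply x G, hx2]
    rfl
  set Γ : Finset (Finset (Fin n)) := univ.filter (fun F => x F ≠ 0) with hΓdef
  have hΓmem : ∀ F, F ∈ Γ ↔ x F ≠ 0 := fun F => by simp [hΓdef]
  have hΓd : ∀ F ∈ Γ, F ∈ Δ ∧ F.card = d := fun F hF => hsupp F ((hΓmem F).mp hF)
  -- Property (P): every (d-1)-subface of a support facet is in another support facet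
  have hP : ∀ F ∈ Γ, ∀ v ∈ F, ∃ a, a ∉ F ∧ insert a (F.erase v) ∈ Γ := by
    intro F hF v hv
    by_contra hcon
    push_neg at hcon
    have h0 := hbd (F.erase v)
    have hv' : v ∈ (F.erase v)ᶜ := by simp
    rw [Finset.sum_eq_single_of_mem v hv' ?_] at h0
    · rw [Finset.insert_erase hv] at h0
      rcases mul_eq_zero.mp h0 with h | h
      · exact pow_ne_zero _ (by norm_num : (-1 : k) ≠ 0) h
      · exact (hΓmem F).mp hF h
    · intro a ha hav
      have haF : a ∉ F := fun hmem =>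
        (Finset.mem_compl.mp ha) (Finset.mem_erase.mpr ⟨hav, hmem⟩)
      have hz : x (insert a (F.erase v)) = 0 := by
        by_contra hzz
        exact hcon a haF ((hΓmem _).mpr hzz)
      rw [hz, mul_zero]
  -- Property (R): from the relation-type bound
  have hR : ∀ F ∈ Γ, ∀ y, y ∉ F → ∃ v ∈ F, insert y (F.erase v) ∉ Γ := by
    intro F hF y hy
    obtain ⟨hFΔ, hFd⟩ := hΓd F hF
    by_contra hcon
    push_neg at hcon
    have hS : (insert y F).card = d + 1 := by
      rw [Finset.card_insert_of_notMem hy, hFd]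
    have hSΔ : insert y F ∉ Δ := fun h => by have := hdim _ h; omega
    have hsub : ∀ G' ⊂ insert y F, G' ∈ Δ := by
      intro G' hG'
      obtain ⟨z, hz, hzG⟩ : ∃ z ∈ insert y F, z ∉ G' := by
        by_contra h
        push_neg at h
        exact hG'.2 h
      have hsub2 : G' ⊆ (insert y F).erase z := fun u hu =>
        Finset.mem_erase.mpr ⟨fun he => hzG (he ▸ hu), hG'.1 hu⟩
      have herz : (insert y F).erase z ∈ Δ := by
        rcases Finset.mem_insert.mp hz with rfl | hzF
        · rw [Finset.erase_insert hy]
          exact hFΔ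
        · rw [Finset.erase_insert_of_ne (by rintro rfl; exact hy hzF)]
          exact (hΓd _ (hcon z hzF)).1
      have : ((insert y F).erase z : Finset (Fin n)) ∈ (↑Δ : Set (Finset (Fin n))) := herz
      exact hΔ _ this G' hsub2
    have := hrt _ hSΔ hsub
    omega
  -- pick a starting facet F
  obtain ⟨F, hFx⟩ := Function.ne_iff.mp hne
  have hFΓ : F ∈ Γ := (hΓmem F).mpr (by simpa using hFx)
  obtain ⟨hFΔ, hFd⟩ := hΓd F hFΓ
  obtain ⟨v0, hv0⟩ : F.Nonempty := Finset.card_pos.mp (by omega)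
  -- a total choice function for property (P)
  have hP' : ∀ (G : Finset (Fin n)) (v : Fin n), ∃ a : Fin n,
      G ∈ Γ → v ∈ G → a ∉ G ∧ insert a (G.erase v) ∈ Γ := by
    intro G v
    by_cases h1 : G ∈ Γ
    · by_cases h2 : v ∈ G
      · obtain ⟨a, ha⟩ := hP G h1 v h2
        exact ⟨a, fun _ _ => ha⟩
      · exact ⟨v0, fun _ h => absurd h h2⟩
    · exact ⟨v0, fun h => absurd h h1⟩
  choose av hav using hP'
  obtain ⟨hy0F, hy0Γ⟩ := hav F v0 hFΓ hv0
  set y : Fin n := av F v0 with hydef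
  set X : Finset (Fin n) := F.filter (fun v => insert y (F.erase v) ∈ Γ) with hXdef
  have hXsub : X ⊆ F := Finset.filter_subset _ _
  have hXmem : ∀ v, v ∈ X ↔ v ∈ F ∧ insert y (F.erase v) ∈ Γ := fun v => by
    simp [hXdef]
  have hXne : v0 ∈ X := (hXmem v0).mpr ⟨hv0, hy0Γ⟩
  have hXt : 1 ≤ X.card := Finset.card_pos.mpr ⟨v0, hXne⟩
  obtain ⟨vbad, hvbadF, hvbadΓ⟩ := hR F hFΓ y hy0F
  have hXlt : X.card < d := by
    have hss : X ⊂ F := ⟨hXsub, fun h => hvbadΓ (((hXmem vbad).mp (h hvbadF)).2)⟩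
    have := Finset.card_lt_card hss
    omega
  set N : Finset (Finset (Fin n)) :=
    Γ.filter (fun H => (F \ H).card = 1 ∧ (H \ F).card = 1) with hNdef
  set M : Finset (Finset (Fin n)) :=
    Γ.filter (fun H => (F \ H).card = 2 ∧ (H \ F).card = 2) with hMdef
  -- |N| ≥ d
  have hNcard : d ≤ N.card := by
    rw [← hFd]
    apply Finset.card_le_card_of_injOn (fun v => insert (av F v) (F.erase v))
    · intro v hv
      obtain ⟨ha, hG⟩ := hav F v hFΓ hv
      refine Finset.mem_filter.mpr ⟨hG, ?_, ?_⟩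
      · rw [sdiff_insert_erase ha hv, Finset.card_singleton]
      · rw [insert_erase_sdiff ha hv, Finset.card_singleton]
    · intro v hv v' hv' heq
      have h1 : F \ insert (av F v) (F.erase v) = {v} :=
        sdiff_insert_erase (hav F v hFΓ hv).1 hv
      have h2 : F \ insert (av F v') (F.erase v') = {v'} :=
        sdiff_insert_erase (hav F v' hFΓ hv').1 hv'
      have : ({v} : Finset (Fin n)) = {v'} := by
        rw [← h1, ← h2]
        exact congrArg (fun H => F \ H) heq
      exact Finset.singleton_inj.mp this
  -- |M| ≥ d - 1
  have hMcard : d - 1 ≤ M.card := by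
    have hcard2 : (X ×ˢ (F \ X)).card = X.card * (d - X.card) := by
      rw [Finset.card_product, Finset.card_sdiff_of_subset hXsub, hFd]
    have hineq : d - 1 ≤ X.card * (d - X.card) := by
      obtain ⟨s, hs⟩ : ∃ s, d = X.card + s := ⟨d - X.card, by omega⟩
      have h1 : 1 ≤ X.card := hXt
      have h2 : 1 ≤ s := by omega
      have h3 : X.card + s ≤ X.card * s + 1 := by nlinarith
      have hds : d - X.card = s := by omega
      rw [hds]
      omega
    have hle : (X ×ˢ (F \ X)).card ≤ M.card := by
      apply Finset.card_le_card_of_injOn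
        (fun p => insert (av (insert y (F.erase p.1)) p.2)
          ((insert y (F.erase p.1)).erase p.2))
      · rintro ⟨v, w⟩ hp
        obtain ⟨hvX, hwFX⟩ := Finset.mem_product.mp hp
        dsimp only at hvX hwFX
        obtain ⟨hwF, hwX⟩ := Finset.mem_sdiff.mp hwFX
        have hvF : v ∈ F := hXsub hvX
        have hGΓ : insert y (F.erase v) ∈ Γ := ((hXmem v).mp hvX).2
        have hvw : v ≠ w := fun h => hwX (h ▸ hvX)
        have hwy : w ≠ y := fun h => hy0F (h ▸ hwF)
        have hwG : w ∈ insert y (F.erase v) :=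
          Finset.mem_insert_of_mem (Finset.mem_erase.mpr ⟨fun h => hvw h.symm, hwF⟩)
        obtain ⟨hbG, hHΓ⟩ := hav (insert y (F.erase v)) w hGΓ hwG
        set b : Fin n := av (insert y (F.erase v)) w with hbdef
        have hby : b ≠ y := fun h => hbG (by rw [h]; exact Finset.mem_insert_self y _)
        have hbF : b ∉ F := by
          intro hmem
          have hbv : b = v := by
            by_contra hbv
            exact hbG (Finset.mem_insert_of_mem (Finset.mem_erase.mpr ⟨hbv, hmem⟩))
          apply hwX
          refine (hXmem w).mpr ⟨hwF, ?_⟩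
          have hkey : insert b ((insert y (F.erase v)).erase w)
              = insert y (F.erase w) := by
            rw [hbv, Finset.erase_insert_of_ne hwy.symm]
            exact insert_swap_identity hvF hwF hvw hy0F
          rwa [hkey] at hHΓ
        have hform : insert b ((insert y (F.erase v)).erase w)
            = insert b (insert y ((F.erase v).erase w)) := by
          rw [Finset.erase_insert_of_ne hwy.symm]
        refine Finset.mem_filter.mpr ⟨hHΓ, ?_, ?_⟩
        · dsimp only; rw [← hbdef, hform, sdiff_pair hvF hwF hvw hy0F hbF hby.symm]
          rw [Finset.card_insert_of_notMem (by simpa using hvw), Finset.card_singleton]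
        · dsimp only; rw [← hbdef, hform, pair_sdiff hvF hwF hvw hy0F hbF hby.symm]
          rw [Finset.card_insert_of_notMem (by simpa using hby.symm), Finset.card_singleton]
      · rintro ⟨v, w⟩ hp ⟨v', w'⟩ hp' heq
        obtain ⟨hvX, hwFX⟩ := Finset.mem_product.mp hp
        dsimp only at hvX hwFX
        obtain ⟨hwF, hwX⟩ := Finset.mem_sdiff.mp hwFX
        obtain ⟨hvX', hwFX'⟩ := Finset.mem_product.mp hp'
        dsimp only at hvX' hwFX'
        obtain ⟨hwF', hwX'⟩ := Finset.mem_sdiff.mp hwFX'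
        have hvF : v ∈ F := hXsub hvX
        have hvF' : v' ∈ F := hXsub hvX'
        have hvw : v ≠ w := fun h => hwX (h ▸ hvX)
        have hvw' : v' ≠ w' := fun h => hwX' (h ▸ hvX')
        -- compute F \ H for both
        have key : ∀ (vv ww : Fin n), vv ∈ X → ww ∈ F → ww ∉ X →
            F \ (insert (av (insert y (F.erase vv)) ww)
              ((insert y (F.erase vv)).erase ww)) = {vv, ww} := by
          intro vv ww hvvX hwwF hwwX
          have hvvF : vv ∈ F := hXsub hvvX
          have hGΓ : insert y (F.erase vv) ∈ Γ := ((hXmem vv).mp hvvX).2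
          have hvw2 : vv ≠ ww := fun h => hwwX (h ▸ hvvX)
          have hwy2 : ww ≠ y := fun h => hy0F (h ▸ hwwF)
          have hwG : ww ∈ insert y (F.erase vv) :=
            Finset.mem_insert_of_mem (Finset.mem_erase.mpr ⟨fun h => hvw2 h.symm, hwwF⟩)
          obtain ⟨hbG, hHΓ⟩ := hav (insert y (F.erase vv)) ww hGΓ hwG
          set b : Fin n := av (insert y (F.erase vv)) ww with hbdef
          have hby : b ≠ y := fun h => hbG (by rw [h]; exact Finset.mem_insert_self y _)
          have hbF : b ∉ F := by
            intro hmem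
            have hbv : b = vv := by
              by_contra hbv
              exact hbG (Finset.mem_insert_of_mem (Finset.mem_erase.mpr ⟨hbv, hmem⟩))
            apply hwwX
            refine (hXmem ww).mpr ⟨hwwF, ?_⟩
            have hkey : insert b ((insert y (F.erase vv)).erase ww)
                = insert y (F.erase ww) := by
              rw [hbv, Finset.erase_insert_of_ne hwy2.symm]
              exact insert_swap_identity hvvF hwwF hvw2 hy0F
            rwa [hkey] at hHΓ
          rw [Finset.erase_insert_of_ne hwy2.symm]
          exact sdiff_pair hvvF hwwF hvw2 hy0F hbF hby.symm
        have e1 := key v w hvX hwF hwX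
        have e2 := key v' w' hvX' hwF' hwX'
        have hpair : ({v, w} : Finset (Fin n)) = {v', w'} := by
          rw [← e1, ← e2]
          simpa using congrArg (fun H => F \ H) heq
        have hv'mem : v' ∈ ({v, w} : Finset (Fin n)) := by
          rw [hpair]; simp
        have hw'mem : w' ∈ ({v, w} : Finset (Fin n)) := by
          rw [hpair]; simp
        have hvmem : v ∈ ({v', w'} : Finset (Fin n)) := by
          rw [← hpair]; simp
        have hvv' : v = v' := by
          rcases Finset.mem_insert.mp hvmem with h | h
          · exact h
          · exact absurd (by rw [← Finset.mem_singleton.mp h]; exact hvX) hwX'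
        have hww' : w = w' := by
          rcases Finset.mem_insert.mp hw'mem with h | h
          · exact absurd (by rw [h]; exact hvX) hwX'
          · exact (Finset.mem_singleton.mp h).symm
        exact Prod.ext hvv' hww'
    omega
  -- assemble the count
  have hFN : F ∉ N := by
    intro h
    have := (Finset.mem_filter.mp h).2.1
    simp at this
  have hFM : F ∉ M := by
    intro h
    have := (Finset.mem_filter.mp h).2.1
    simp at this
  have hdisj : Disjoint N M := by
    rw [Finset.disjoint_left]
    intro H h1 h2
    have a1 := (Finset.mem_filter.mp h1).2.1
    have a2 := (Finset.mem_filter.mp h2).2.1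
    omega
  have hsubΓ : insert F (N ∪ M) ⊆ Γ := by
    intro H hH
    rcases Finset.mem_insert.mp hH with rfl | hH
    · exact hFΓ
    · rcases Finset.mem_union.mp hH with h | h
      · exact (Finset.mem_filter.mp h).1
      · exact (Finset.mem_filter.mp h).1
  have hcount : 1 + N.card + M.card ≤ Γ.card := by
    have h1 : (insert F (N ∪ M)).card = 1 + (N.card + M.card) := by
      rw [Finset.card_insert_of_notMem (by
        intro h
        rcases Finset.mem_union.mp h with h | h
        · exact hFN h
        · exact hFM h), Finset.card_union_of_disjoint hdisj]
      omega
    have h2 := Finset.card_le_card hsubΓ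
    omega
  have hΓle : Γ.card ≤ 2 * d - 1 := by
    refine le_trans (Finset.card_le_card ?_) hmult
    intro H hH
    obtain ⟨h1, h2⟩ := hΓd H hH
    exact Finset.mem_filter.mpr ⟨h1, h2⟩
  omega
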